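/- For every integer P ≥ 1, set c_R^P = (P+3)/(2(P+1)^{1/3}). Then the number x_D = −(P+1)^{-1/3} lies in (−1,0) and satisfies 1/(2x_D²) − x_D = c_R^P, and the number x_R = (−(P+1) + √((P+1)(P+9)))/(4(P+1)^{1/3}) is positive and satisfies 1/(2x_R²) − x_R = c_R^P. (Hence L_D(c_R^P) = −(P+1)^{-1/3} and L_R(c_R^P) = (−(P+1)+√((P+1)(P+9)))/(4(P+1)^{1/3}).) -/

import Mathlib

lemma key_roots (t s : ℝ) (ht1 : 1 < t) (hs0 : 0 ≤ s)
    (hs2 : s^2 = t^6 + 8*t^3) :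
    ((-1 < -(1/t) ∧ -(1/t) < 0) ∧
      1/(2*(-(1/t))^2) - (-(1/t)) = (t^3+2)/(2*t)) ∧
    (0 < (s - t^3)/(4*t) ∧
      1/(2*((s - t^3)/(4*t))^2) - (s - t^3)/(4*t) = (t^3+2)/(2*t)) := by
  have ht0 : (0:ℝ) < t := lt_trans one_pos ht1
  have htp : (0:ℝ) < t^3 := pow_pos ht0 3
  have hsp : (0:ℝ) < s + t^3 := by linarith
  have hprod : (s - t^3)*(s + t^3) = 8*t^3 := by linear_combination hs2
  have hnum : 0 < s - t^3 := by nlinarith [hprod, hsp, htp]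
  constructor
  · refine ⟨⟨?_, ?_⟩, ?_⟩
    · have : 1/t < 1 := by rw [div_lt_one ht0]; exact ht1
      linarith
    · have : 0 < 1/t := by positivity
      linarith
    · field_simp
      ring
  · have hx : 0 < (s - t^3)/(4*t) := div_pos hnum (by linarith)
    refine ⟨hx, ?_⟩
    have hne : s - t^3 ≠ 0 := ne_of_gt hnum
    field_simp
    linear_combination (-2*s+2*t^3-8)*hs2

/-- For every integer `P ≥ 1` and `c_R^P = (P+3)/(2(P+1)^{1/3})`:
`x_D = −(P+1)^{-1/3}` lies in `(−1,0)` and solves `1/(2x²) − x = c_R^P`,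
and `x_R = (−(P+1)+√((P+1)(P+9)))/(4(P+1)^{1/3})` is positive and solves the
same equation. Hence `L_D(c_R^P) = −(P+1)^{-1/3}` and
`L_R(c_R^P) = (−(P+1)+√((P+1)(P+9)))/(4(P+1)^{1/3})`. -/
theorem roots_at_cRP (P : ℕ) (hP : 1 ≤ P) :
    let cRP : ℝ := ((P:ℝ)+3) / (2 * ((P:ℝ)+1) ^ ((1:ℝ)/3))
    let xD : ℝ := -(((P:ℝ)+1) ^ (-(1:ℝ)/3))
    let xR : ℝ := (-((P:ℝ)+1) + Real.sqrt (((P:ℝ)+1) * ((P:ℝ)+9))) /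
      (4 * ((P:ℝ)+1) ^ ((1:ℝ)/3))
    ((-1 < xD ∧ xD < 0) ∧ 1/(2*xD^2) - xD = cRP) ∧
    (0 < xR ∧ 1/(2*xR^2) - xR = cRP) := by
  intro cRP xD xR
  have hu : (0:ℝ) < (P:ℝ)+1 := by positivity
  have hu1 : (1:ℝ) < (P:ℝ)+1 := by
    have : (1:ℝ) ≤ (P:ℝ) := by exact_mod_cast hP
    linarith
  obtain ⟨t, ht⟩ : ∃ t : ℝ, t = ((P:ℝ)+1) ^ ((1:ℝ)/3) := ⟨_, rfl⟩
  obtain ⟨s, hs⟩ : ∃ s : ℝ, s = Real.sqrt (((P:ℝ)+1) * ((P:ℝ)+9)) := ⟨_, rfl⟩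
  have ht1 : 1 < t := by
    rw [ht]
    exact (Real.one_lt_rpow_iff_of_pos hu).mpr (Or.inl ⟨hu1, by norm_num⟩)
  have ht0 : (0:ℝ) < t := lt_trans one_pos ht1
  have ht3 : t^3 = (P:ℝ)+1 := by
    rw [ht, ← Real.rpow_natCast (((P:ℝ)+1) ^ ((1:ℝ)/3)) 3,
      ← Real.rpow_mul hu.le]
    norm_num
  have hs0 : (0:ℝ) ≤ s := hs ▸ Real.sqrt_nonneg _
  have hs2 : s^2 = t^6 + 8*t^3 := by
    rw [hs, Real.sq_sqrt (by positivity : (0:ℝ) ≤ ((P:ℝ)+1) * ((P:ℝ)+9))]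
    nlinarith [ht3]
  have hxD : xD = -(1/t) := by
    show -(((P:ℝ)+1) ^ (-(1:ℝ)/3)) = -(1/t)
    rw [ht, one_div, ← Real.rpow_neg hu.le]
    congr 1
    ring_nf
  have hxR : xR = (s - t^3)/(4*t) := by
    show (-((P:ℝ)+1) + Real.sqrt (((P:ℝ)+1) * ((P:ℝ)+9))) /
      (4 * ((P:ℝ)+1) ^ ((1:ℝ)/3)) = (s - t^3)/(4*t)
    rw [← hs, ← ht, ht3]; ring
  have hcRP : cRP = (t^3+2)/(2*t) := by
    show ((P:ℝ)+3) / (2 * ((P:ℝ)+1) ^ ((1:ℝ)/3)) = (t^3+2)/(2*t)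
    rw [← ht, ht3]; ring
  rw [hxD, hxR, hcRP]
  exact key_roots t s ht1 hs0 hs2
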